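/- Let d ≥ 2, ω = e^{2πi/d}, and for l ∈ {0,...,d−1} define |ψ_l⟩ = (1/√d) Σ_{k=0}^{d−1} ω^{kl} |kk⟩ and |Ψ_l⟩ = |ψ_l⟩^{⊗ d} ∈ (ℂ^d)^{⊗ 2d}. Then for any unit vector α ∈ ℂ^d, the state |Ψ_α⟩ = Σ_{l=0}^{d−1} α_l |Ψ_l⟩ is a unit vector, and its reduced density matrix on each of the 2d single-system factors equals I_d/d. In particular, the map |l⟩ ↦ |Ψ_l⟩ masks all d-level quantum states into 2d systems of dimension d. -/

import Mathlib

open Finset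

noncomputable def auxF (d : ℕ) (ω : ℂ) (l : Fin d) (v : Fin 2 → Fin d) : ℂ :=
  if v 0 = v 1 then ω ^ ((v 0 : ℕ) * (l : ℕ)) / (Real.sqrt d : ℂ) else 0

lemma aux_star (d : ℕ) (ω : ℂ) (hω : ω = Complex.exp (2 * Real.pi * Complex.I / d)) :
    star ω = ω⁻¹ := by
  subst hω
  rw [← Complex.exp_neg, Complex.star_def, ← Complex.exp_conj]
  congr 1
  simp [map_div₀, Complex.conj_I, map_ofNat]
  ring

lemma aux_ne (d : ℕ) (ω : ℂ) (hω : ω = Complex.exp (2 * Real.pi * Complex.I / d)) :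
    ω ≠ 0 := by
  subst hω; exact Complex.exp_ne_zero _

lemma aux_key (d : ℕ) (hd : 2 ≤ d) (ω : ℂ)
    (hω : ω = Complex.exp (2 * Real.pi * Complex.I / d)) (l l' : Fin d) :
    ∑ k : Fin d, ω ^ ((k : ℕ) * (l : ℕ)) * star (ω ^ ((k : ℕ) * (l' : ℕ)))
      = if l = l' then (d : ℂ) else 0 := by
  have hne : ω ≠ 0 := aux_ne d ω hω
  have hst : star ω = ω⁻¹ := aux_star d ω hω
  have hprim : IsPrimitiveRoot ω d := hω ▸ Complex.isPrimitiveRoot_exp d (by omega)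
  set ζ : ℂ := ω ^ ((l : ℤ) - (l' : ℤ)) with hζ
  have hterm : ∀ k : Fin d, ω ^ ((k : ℕ) * (l : ℕ)) * star (ω ^ ((k : ℕ) * (l' : ℕ)))
      = ζ ^ (k : ℕ) := by
    intro k
    rw [star_pow, hst, hζ]
    rw [← zpow_natCast ω ((k : ℕ) * (l : ℕ)), ← zpow_natCast ω⁻¹ ((k : ℕ) * (l' : ℕ)),
      inv_zpow, ← zpow_neg, ← zpow_add₀ hne, ← zpow_natCast (ω ^ ((l:ℤ) - (l':ℤ))),
      ← zpow_mul]
    congr 1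
    push_cast
    ring
  rw [Finset.sum_congr rfl (fun k _ => hterm k)]
  rw [Fin.sum_univ_eq_sum_range (fun n => ζ ^ n) d]
  by_cases h : l = l'
  · subst h
    simp [hζ]
  · rw [if_neg h]
    have hζne : ζ ≠ 1 := by
      intro hc
      rw [hζ, (hprim.zpow_eq_one_iff_dvd _)] at hc
      have := Int.eq_zero_of_abs_lt_dvd hc (by
        have h1 := l.isLt; have h2 := l'.isLt
        rw [abs_sub_lt_iff]; constructor <;> omega)
      apply h
      have : (l : ℤ) = (l' : ℤ) := by omega
      exact Fin.ext (by exact_mod_cast this)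
    rw [geom_sum_eq hζne]
    have hζd : ζ ^ d = 1 := by
      rw [hζ, ← zpow_natCast (ω ^ ((l:ℤ) - (l':ℤ))) d, ← zpow_mul, mul_comm,
        zpow_mul, zpow_natCast, hprim.pow_eq_one, one_zpow]
    rw [hζd]
    simp

lemma aux_D (d : ℕ) (G : Fin d → (Fin 2 → Fin d) → ℂ) :
    ∑ f : (Fin d × Fin 2) → Fin d, ∏ i, G i (fun t => f (i, t))
      = ∏ i, ∑ v : Fin 2 → Fin d, G i v := by
  rw [Finset.prod_univ_sum (fun _ => (univ : Finset (Fin 2 → Fin d))) (fun i v => G i v)]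
  rw [Fintype.piFinset_univ]
  exact Fintype.sum_equiv (Equiv.curry (Fin d) (Fin 2) (Fin d)) _ _ (fun f => rfl)

lemma aux_sqrt (d : ℕ) (hd : 2 ≤ d) :
    ((Real.sqrt d : ℝ) : ℂ) * ((Real.sqrt d : ℝ) : ℂ) = (d : ℂ) := by
  rw [← Complex.ofReal_mul, Real.mul_self_sqrt (by positivity)]
  simp

lemma aux_B (d : ℕ) (hd : 2 ≤ d) (ω : ℂ)
    (hω : ω = Complex.exp (2 * Real.pi * Complex.I / d)) (l l' : Fin d) :
    ∑ v : Fin 2 → Fin d, auxF d ω l v * star (auxF d ω l' v)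
      = if l = l' then 1 else 0 := by
  have hdc : (d : ℂ) ≠ 0 := Nat.cast_ne_zero.2 (by omega)
  rw [← Equiv.sum_comp (finTwoArrowEquiv (Fin d)).symm]
  rw [Fintype.sum_prod_type]
  have hterm : ∀ a b : Fin d,
      auxF d ω l ((finTwoArrowEquiv (Fin d)).symm (a, b)) *
        star (auxF d ω l' ((finTwoArrowEquiv (Fin d)).symm (a, b)))
      = if b = a then ω ^ ((a:ℕ)*(l:ℕ)) * star (ω ^ ((a:ℕ)*(l':ℕ))) / d else 0 := by
    intro a b
    simp only [auxF, finTwoArrowEquiv_symm_apply, Matrix.cons_val_zero, Matrix.cons_val_one,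
      Matrix.head_cons]
    by_cases h : a = b
    · rw [if_pos h, if_pos h, if_pos h.symm, star_div₀,
        show (star ((Real.sqrt d : ℝ) : ℂ)) = ((Real.sqrt d : ℝ) : ℂ) from Complex.conj_ofReal _,
        div_mul_div_comm, aux_sqrt d hd]
    · rw [if_neg h, if_neg h, if_neg (fun hh => h hh.symm)]
      simp
  simp only [hterm]
  rw [Finset.sum_comm]
  simp only [Finset.sum_ite_eq, Finset.mem_univ, if_true]
  rw [← Finset.sum_div, aux_key d hd ω hω l l']
  split
  · exact div_self hdc
  · exact zero_div _

lemma aux_C (d : ℕ) (hd : 2 ≤ d) (ω : ℂ)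
    (hω : ω = Complex.exp (2 * Real.pi * Complex.I / d)) (s : Fin 2) (x x' l l' : Fin d) :
    ∑ v : Fin 2 → Fin d,
      (if v s = x then auxF d ω l v * star (auxF d ω l' (Function.update v s x')) else 0)
      = if x = x' then ω ^ ((x:ℕ)*(l:ℕ)) * star (ω ^ ((x:ℕ)*(l':ℕ))) / d else 0 := by
  have hval : ∀ m m' : ℕ, (ω ^ m / (Real.sqrt d : ℂ)) * star (ω ^ m' / (Real.sqrt d : ℂ))
      = ω ^ m * star (ω ^ m') / d := by
    intro m m'
    rw [star_div₀,
      show (star ((Real.sqrt d : ℝ) : ℂ)) = ((Real.sqrt d : ℝ) : ℂ) from Complex.conj_ofReal _,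
      div_mul_div_comm, aux_sqrt d hd]
  have key : ∀ (P Q : ℂ), (∑ b : Fin d, (if x = b then P else 0) * star (if x' = b then Q else 0))
      = if x = x' then P * star Q else 0 := by
    intro P Q
    have hpt : ∀ b : Fin d, (if x = b then P else 0) * star (if x' = b then Q else 0)
        = if b = x then (if x = x' then P * star Q else 0) else 0 := by
      intro b
      by_cases h1 : x = b <;> by_cases h2 : x' = b <;>
        simp_all [eq_comm] <;> simp [h1, h2]
    simp only [hpt]
    simp [Finset.sum_ite_eq]
  rw [← Equiv.sum_comp (finTwoArrowEquiv (Fin d)).symm, Fintype.sum_prod_type]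
  fin_cases s
  · have h0 : ∀ a b : Fin d, Function.update (![a,b] : Fin 2 → Fin d) 0 x' = ![x', b] := by
      intro a b; funext t; fin_cases t <;> simp [Function.update_apply]
    simp only [Fin.mk_zero, Fin.mk_one, finTwoArrowEquiv_symm_apply, h0, auxF,
      Matrix.cons_val_zero, Matrix.cons_val_one, Matrix.head_cons]
    rw [Finset.sum_comm]
    have houter : ∀ b : Fin d, (∑ a : Fin d, if a = x then
        (if a = b then ω ^ ((a:ℕ)*(l:ℕ)) / (Real.sqrt d : ℂ) else 0) *
          star (if x' = b then ω ^ ((x':ℕ)*(l':ℕ)) / (Real.sqrt d : ℂ) else 0) else 0)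
        = (if x = b then ω ^ ((x:ℕ)*(l:ℕ)) / (Real.sqrt d : ℂ) else 0) *
          star (if x' = b then ω ^ ((x':ℕ)*(l':ℕ)) / (Real.sqrt d : ℂ) else 0) := by
      intro b
      rw [Finset.sum_ite_eq' univ x]
      simp
    simp only [houter, key]
    split_ifs with h
    · subst h; exact hval _ _
    · rfl
  · have h1 : ∀ a b : Fin d, Function.update (![a,b] : Fin 2 → Fin d) 1 x' = ![a, x'] := by
      intro a b; funext t; fin_cases t <;> simp [Function.update_apply]
    simp only [Fin.mk_zero, Fin.mk_one, finTwoArrowEquiv_symm_apply, h1, auxF,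
      Matrix.cons_val_zero, Matrix.cons_val_one, Matrix.head_cons]
    have hinner : ∀ a : Fin d, (∑ b : Fin d, if b = x then
        (if a = b then ω ^ ((a:ℕ)*(l:ℕ)) / (Real.sqrt d : ℂ) else 0) *
          star (if a = x' then ω ^ ((a:ℕ)*(l':ℕ)) / (Real.sqrt d : ℂ) else 0) else 0)
        = (if a = x then ω ^ ((a:ℕ)*(l:ℕ)) / (Real.sqrt d : ℂ) else 0) *
          star (if a = x' then ω ^ ((a:ℕ)*(l':ℕ)) / (Real.sqrt d : ℂ) else 0) := by
      intro a
      rw [Finset.sum_ite_eq' univ x]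
      simp
    simp only [hinner]
    have hpt2 : ∀ a : Fin d, (if a = x then ω ^ ((a:ℕ)*(l:ℕ)) / (Real.sqrt d : ℂ) else 0) *
          star (if a = x' then ω ^ ((a:ℕ)*(l':ℕ)) / (Real.sqrt d : ℂ) else 0)
        = if a = x then (if x = x' then ω ^ ((x:ℕ)*(l:ℕ)) * star (ω ^ ((x:ℕ)*(l':ℕ))) / d else 0)
          else 0 := by
      intro a
      by_cases h1 : a = x
      · subst h1
        by_cases h2 : a = x'
        · subst h2
          rw [if_pos (rfl : a = a), if_pos (rfl : a = a), if_pos (rfl : a = a), hval,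
            if_pos (rfl : a = a)]
        · rw [if_pos rfl, if_pos rfl, if_neg h2, if_neg h2, star_zero, mul_zero]
      · rw [if_neg h1, if_neg h1, zero_mul]
    simp only [hpt2]
    simp [Finset.sum_ite_eq]


/-- Masking all `d`-level states into `2d` systems of dimension `d`:
with `ω = exp(2πi/d)`, `|ψ_l⟩ = (1/√d) ∑ k ω^{kl}|kk⟩` and `|Ψ_l⟩ = |ψ_l⟩^{⊗d}`,
for any unit vector `α ∈ ℂ^d` the state `|Ψ_α⟩ = ∑ l α_l |Ψ_l⟩` is a unit vector
and every one of the `2d` single-system reduced density matrices equals `I_d/d`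
(hence is independent of `α`, i.e. the map `|l⟩ ↦ |Ψ_l⟩` is a masker).
The `2d` factors are indexed by `Fin d × Fin 2` (`d` pairs of two `ℂ^d` systems);
vectors in `(ℂ^d)^{⊗2d}` are functions `(Fin d × Fin 2 → Fin d) → ℂ`. -/
theorem stmt_7 (d : ℕ) (hd : 2 ≤ d)
    (ω : ℂ) (hω : ω = Complex.exp (2 * Real.pi * Complex.I / d))
    (α : Fin d → ℂ) (hα : (∑ l : Fin d, ‖α l‖ ^ 2) = 1)
    (Ψl : Fin d → ((Fin d × Fin 2) → Fin d) → ℂ)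
    (hΨl : ∀ (l : Fin d) (f : (Fin d × Fin 2) → Fin d),
      Ψl l f = ∏ i : Fin d,
        (if f (i, 0) = f (i, 1) then
          ω ^ ((f (i, 0) : ℕ) * (l : ℕ)) / (Real.sqrt d : ℂ) else 0))
    (Ψ : ((Fin d × Fin 2) → Fin d) → ℂ)
    (hΨ : ∀ f, Ψ f = ∑ l : Fin d, α l * Ψl l f) :
    (∑ f : (Fin d × Fin 2) → Fin d, ‖Ψ f‖ ^ 2) = 1 ∧
    ∀ (p : Fin d × Fin 2) (x x' : Fin d),
      (∑ f : (Fin d × Fin 2) → Fin d,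
        if f p = x then Ψ f * star (Ψ (Function.update f p x')) else 0)
      = if x = x' then (1 / d : ℂ) else 0 := by
  have hdc : (d : ℂ) ≠ 0 := Nat.cast_ne_zero.2 (by omega)
  have hne : ω ≠ 0 := aux_ne d ω hω
  have hst : star ω = ω⁻¹ := aux_star d ω hω
  have hpow1 : ∀ n : ℕ, ω ^ n * star (ω ^ n) = 1 := by
    intro n
    rw [star_pow, hst, ← mul_pow, mul_inv_cancel₀ hne, one_pow]
  have hΨF : ∀ l f, Ψl l f = ∏ i, auxF d ω l (fun t => f (i, t)) := by
    intro l f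
    rw [hΨl]
    rfl
  have hT : ∀ l l' : Fin d,
      (∑ f : (Fin d × Fin 2) → Fin d, Ψl l f * star (Ψl l' f)) = if l = l' then 1 else 0 := by
    intro l l'
    have hpt : ∀ f : (Fin d × Fin 2) → Fin d, Ψl l f * star (Ψl l' f)
        = ∏ i, (auxF d ω l (fun t => f (i,t)) * star (auxF d ω l' (fun t => f (i,t)))) := by
      intro f
      rw [hΨF l f, hΨF l' f, star_prod, ← Finset.prod_mul_distrib]
    rw [Finset.sum_congr rfl (fun f _ => hpt f),
      aux_D d (fun i v => auxF d ω l v * star (auxF d ω l' v)),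
      Finset.prod_congr rfl (fun i _ => aux_B d hd ω hω l l'), Finset.prod_const]
    split_ifs with h
    · exact one_pow _
    · refine zero_pow ?_
      simp only [Finset.card_univ, Fintype.card_fin]
      omega
  have halg : ∑ l, α l * star (α l) = 1 := by
    have hterm : ∀ l, α l * star (α l) = ((‖α l‖ ^ 2 : ℝ) : ℂ) := by
      intro l
      rw [Complex.star_def, Complex.mul_conj, Complex.normSq_eq_norm_sq]
    rw [Finset.sum_congr rfl (fun l _ => hterm l), ← Complex.ofReal_sum, hα, Complex.ofReal_one]
  constructor
  · have hC : ∑ f : (Fin d × Fin 2) → Fin d, Ψ f * star (Ψ f) = 1 := by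
      have hexp : ∀ f, Ψ f * star (Ψ f)
          = ∑ l, ∑ l', (α l * star (α l')) * (Ψl l f * star (Ψl l' f)) := by
        intro f
        rw [hΨ f, star_sum, Finset.sum_mul_sum]
        refine Finset.sum_congr rfl fun l _ => Finset.sum_congr rfl fun l' _ => ?_
        rw [star_mul']
        ring
      rw [Finset.sum_congr rfl fun f _ => hexp f, Finset.sum_comm,
        Finset.sum_congr rfl fun l _ => Finset.sum_comm]
      have hcl : ∀ l l' : Fin d, (∑ f : (Fin d × Fin 2) → Fin d,
          (α l * star (α l')) * (Ψl l f * star (Ψl l' f)))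
          = (α l * star (α l')) * (if l = l' then 1 else 0) := by
        intro l l'
        rw [← Finset.mul_sum, hT]
      rw [Finset.sum_congr rfl fun l _ => Finset.sum_congr rfl fun l' _ => hcl l l']
      simp only [mul_ite, mul_one, mul_zero, Finset.sum_ite_eq, Finset.mem_univ, if_true]
      exact halg
    have hre : ∀ f : (Fin d × Fin 2) → Fin d, Ψ f * star (Ψ f) = ((‖Ψ f‖ ^ 2 : ℝ) : ℂ) := by
      intro f
      rw [Complex.star_def, Complex.mul_conj, Complex.normSq_eq_norm_sq]
    rw [Finset.sum_congr rfl fun f _ => hre f, ← Complex.ofReal_sum] at hC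
    exact_mod_cast hC
  · rintro ⟨i₀, s⟩ x x'
    have hU : ∀ l l' : Fin d,
        (∑ f : (Fin d × Fin 2) → Fin d,
          (if f (i₀, s) = x then Ψl l f * star (Ψl l' (Function.update f (i₀,s) x')) else 0))
        = if l = l' then (if x = x' then ω ^ ((x:ℕ)*(l:ℕ)) * star (ω ^ ((x:ℕ)*(l':ℕ))) / d else 0)
          else 0 := by
      intro l l'
      have hpoint : ∀ f : (Fin d × Fin 2) → Fin d,
          (if f (i₀, s) = x then Ψl l f * star (Ψl l' (Function.update f (i₀,s) x')) else 0)
          = ∏ i, (fun i (v : Fin 2 → Fin d) => if i = i₀ then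
              (if v s = x then auxF d ω l v * star (auxF d ω l' (Function.update v s x')) else 0)
              else auxF d ω l v * star (auxF d ω l' v)) i (fun t => f (i, t)) := by
        intro f
        have hupd : ∀ i : Fin d, (fun t => Function.update f (i₀,s) x' (i, t))
            = if i = i₀ then Function.update (fun t => f (i₀,t)) s x' else (fun t => f (i,t)) := by
          intro i
          by_cases hi : i = i₀
          · subst hi
            rw [if_pos rfl]
            funext t
            by_cases ht : t = s
            · subst ht
              simp [Function.update_apply]
            · simp [Function.update_apply, Prod.ext_iff, ht]
          · rw [if_neg hi]
            funext t
            simp [Function.update_apply, Prod.ext_iff, hi]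
        by_cases hc : f (i₀, s) = x
        · rw [if_pos hc, hΨF l f, hΨF l' (Function.update f (i₀,s) x'), star_prod,
            ← Finset.prod_mul_distrib]
          refine Finset.prod_congr rfl fun i _ => ?_
          dsimp only
          rw [hupd i]
          by_cases hi : i = i₀
          · subst hi
            rw [if_pos rfl, if_pos rfl, if_pos hc]
          · rw [if_neg hi, if_neg hi]
        · rw [if_neg hc]
          symm
          apply Finset.prod_eq_zero (Finset.mem_univ i₀)
          dsimp only
          simp only [if_pos rfl]
          exact if_neg hc
      rw [Finset.sum_congr rfl fun f _ => hpoint f,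
        aux_D d (fun i v => if i = i₀ then
          (if v s = x then auxF d ω l v * star (auxF d ω l' (Function.update v s x')) else 0)
          else auxF d ω l v * star (auxF d ω l' v))]
      have hfac : ∀ i : Fin d, (∑ v : Fin 2 → Fin d, (if i = i₀ then
            (if v s = x then auxF d ω l v * star (auxF d ω l' (Function.update v s x')) else 0)
            else auxF d ω l v * star (auxF d ω l' v)))
          = if i = i₀ then (if x = x' then ω ^ ((x:ℕ)*(l:ℕ)) * star (ω ^ ((x:ℕ)*(l':ℕ))) / d else 0)
            else (if l = l' then 1 else 0) := by
        intro i
        by_cases hi : i = i₀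
        · simp only [if_pos hi]
          exact aux_C d hd ω hω s x x' l l'
        · simp only [if_neg hi]
          exact aux_B d hd ω hω l l'
      rw [Finset.prod_congr rfl fun i _ => hfac i]
      by_cases hll : l = l'
      · rw [if_pos hll]
        rw [Finset.prod_ite_eq' univ i₀]
        simp [hll]
      · rw [if_neg hll, if_neg hll]
        have hnt : Nontrivial (Fin d) := ⟨⟨0, by omega⟩, ⟨1, by omega⟩, by simp [Fin.ext_iff]⟩
        obtain ⟨i₁, hi₁⟩ := exists_ne i₀
        apply Finset.prod_eq_zero (Finset.mem_univ i₁)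
        rw [if_neg hi₁]
    have hexp2 : ∀ f : (Fin d × Fin 2) → Fin d,
        (if f (i₀,s) = x then Ψ f * star (Ψ (Function.update f (i₀,s) x')) else 0)
        = ∑ l, ∑ l', (α l * star (α l')) *
            (if f (i₀,s) = x then Ψl l f * star (Ψl l' (Function.update f (i₀,s) x')) else 0) := by
      intro f
      by_cases hc : f (i₀,s) = x
      · simp only [if_pos hc]
        rw [hΨ f, hΨ (Function.update f (i₀,s) x'), star_sum, Finset.sum_mul_sum]
        refine Finset.sum_congr rfl fun l _ => Finset.sum_congr rfl fun l' _ => ?_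
        rw [star_mul']
        ring
      · simp only [if_neg hc]
        simp
    rw [Finset.sum_congr rfl fun f _ => hexp2 f, Finset.sum_comm,
      Finset.sum_congr rfl fun l _ => Finset.sum_comm]
    have hcl2 : ∀ l l' : Fin d, (∑ f : (Fin d × Fin 2) → Fin d, (α l * star (α l')) *
        (if f (i₀,s) = x then Ψl l f * star (Ψl l' (Function.update f (i₀,s) x')) else 0))
        = (α l * star (α l')) * (if l = l' then
            (if x = x' then ω ^ ((x:ℕ)*(l:ℕ)) * star (ω ^ ((x:ℕ)*(l':ℕ))) / d else 0) else 0) := by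
      intro l l'
      rw [← Finset.mul_sum, hU]
    rw [Finset.sum_congr rfl fun l _ => Finset.sum_congr rfl fun l' _ => hcl2 l l']
    simp only [mul_ite, mul_zero, Finset.sum_ite_eq, Finset.mem_univ, if_true]
    by_cases hxx : x = x'
    · simp only [if_pos hxx]
      have : ∀ l : Fin d, α l * star (α l) * (ω ^ ((x:ℕ)*(l:ℕ)) * star (ω ^ ((x:ℕ)*(l:ℕ))) / d)
          = (α l * star (α l)) * (1 / d) := by
        intro l
        rw [hpow1]
      rw [Finset.sum_congr rfl fun l _ => this l, ← Finset.sum_mul, halg, one_mul]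
    · simp [hxx]
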